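/- Order-dependence for incompatible projections: if P and Q are orthogonal projections on a finite-dimensional complex Hilbert space with P Q ≠ Q P, then there exists a unit vector ψ such that ⟨ψ, P Q P ψ⟩ ≠ ⟨ψ, Q P Q ψ⟩. -/
import Mathlib


open scoped InnerProductSpace

/-- order-dependence for incompatible projections: if `P Q ≠ Q P`, then
some unit vector `ψ` has `⟪ψ, P Q P ψ⟫ ≠ ⟪ψ, Q P Q ψ⟫`. -/
theorem stmt_18 {H : Type*} [NormedAddCommGroup H] [InnerProductSpace ℂ H]
    [FiniteDimensional ℂ H] (P Q : H →ₗ[ℂ] H)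
    (hPidem : P ∘ₗ P = P) (hPsa : ∀ x y : H, ⟪P x, y⟫_ℂ = ⟪x, P y⟫_ℂ)
    (hQidem : Q ∘ₗ Q = Q) (hQsa : ∀ x y : H, ⟪Q x, y⟫_ℂ = ⟪x, Q y⟫_ℂ)
    (hne : P ∘ₗ Q ≠ Q ∘ₗ P) :
    ∃ ψ : H, ‖ψ‖ = 1 ∧ ⟪ψ, P (Q (P ψ))⟫_ℂ ≠ ⟪ψ, Q (P (Q ψ))⟫_ℂ := by
  have hPP : ∀ x : H, P (P x) = P x := fun x => LinearMap.congr_fun hPidem x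
  have hQQ : ∀ x : H, Q (Q x) = Q x := fun x => LinearMap.congr_fun hQidem x
  by_contra hcon
  push_neg at hcon
  -- Step 1: the quadratic forms agree for all vectors (by scaling)
  have hall : ∀ ψ : H, ⟪ψ, P (Q (P ψ))⟫_ℂ = ⟪ψ, Q (P (Q ψ))⟫_ℂ := by
    intro ψ
    rcases eq_or_ne ψ 0 with rfl | hψ
    · simp
    · set c : ℂ := (‖ψ‖ : ℂ)⁻¹ with hc
      have hnorm : ‖c • ψ‖ = 1 := by
        simp [hc, norm_smul, norm_inv, inv_mul_cancel₀ (norm_ne_zero_iff.mpr hψ)]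
      have h := hcon (c • ψ) hnorm
      have hc0 : c ≠ 0 := by
        simp [hc, norm_ne_zero_iff.mpr hψ]
      have hcs : (starRingEnd ℂ) c = c := by
        simp [hc]
      have expand : ∀ T : H →ₗ[ℂ] H, ⟪c • ψ, T (c • ψ)⟫_ℂ = c * c * ⟪ψ, T ψ⟫_ℂ := by
        intro T
        rw [map_smul, inner_smul_left, inner_smul_right, hcs]
        ring
      have h1 := expand (P ∘ₗ Q ∘ₗ P)
      have h2 := expand (Q ∘ₗ P ∘ₗ Q)
      simp only [LinearMap.comp_apply] at h1 h2
      rw [h1, h2] at h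
      exact mul_left_cancel₀ (mul_ne_zero hc0 hc0) h
  -- Step 2: PQP = QPQ
  have hE : ∀ x : H, P (Q (P x)) = Q (P (Q x)) := by
    have hz : (P ∘ₗ Q ∘ₗ P - Q ∘ₗ P ∘ₗ Q : H →ₗ[ℂ] H) = 0 := by
      rw [← inner_map_self_eq_zero]
      intro x
      have : ⟪x, (P ∘ₗ Q ∘ₗ P - Q ∘ₗ P ∘ₗ Q) x⟫_ℂ = 0 := by
        simp only [LinearMap.sub_apply, LinearMap.comp_apply, inner_sub_right]
        rw [hall x]
        ring
      rw [← inner_conj_symm, this, map_zero]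
    intro x
    have := LinearMap.congr_fun hz x
    simp only [LinearMap.sub_apply, LinearMap.comp_apply, LinearMap.zero_apply,
      sub_eq_zero] at this
    exact this
  -- Step 3: derive PQ = QP
  apply hne
  ext x
  simp only [LinearMap.comp_apply]
  rw [← sub_eq_zero, ← inner_self_eq_zero (𝕜 := ℂ)]
  set u := P (Q x) - Q (P x) with hu
  have e1 : ⟪P (Q x), P (Q x)⟫_ℂ = ⟪x, Q (P (Q x))⟫_ℂ := by
    rw [hPsa, hPP, ← hQsa]
  have e2 : ⟪Q (P x), Q (P x)⟫_ℂ = ⟪x, P (Q (P x))⟫_ℂ := by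
    rw [hQsa, hQQ, ← hPsa]
  have e3 : ⟪P (Q x), Q (P x)⟫_ℂ = ⟪x, Q (P (Q (P x)))⟫_ℂ := by
    rw [← hQsa x, ← hPsa (Q x)]
  have e4 : ⟪Q (P x), P (Q x)⟫_ℂ = ⟪x, P (Q (P (Q x)))⟫_ℂ := by
    rw [← hPsa x, ← hQsa (P x)]
  -- QPQP x = QPQ x and PQPQ x = PQP x using hE
  have f3 : Q (P (Q (P x))) = P (Q (P x)) := by
    have h := hE (P x); rw [hPP] at h; exact h.symm
  have f4 : P (Q (P (Q x))) = Q (P (Q x)) := by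
    have h := hE (Q x); rw [hQQ] at h; exact h
  have expand : ⟪u, u⟫_ℂ = ⟪P (Q x), P (Q x)⟫_ℂ - ⟪P (Q x), Q (P x)⟫_ℂ
      - ⟪Q (P x), P (Q x)⟫_ℂ + ⟪Q (P x), Q (P x)⟫_ℂ := by
    simp only [hu, inner_sub_left, inner_sub_right]
    ring
  rw [expand, e1, e2, e3, e4, f3, f4]
  ring
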